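/- For positive integers 𝔇 ≥ 3, Σ |ABCD|^{−1/2} ≤ ((q−1)/(2q))·𝔇³ + O(𝔇²), where the sum is over quadruples (A,B,C,D) of monic polynomials in F_q[x] satisfying 𝔇−3 ≤ deg(AB) ≤ 𝔇, deg(CD) ≤ 𝔇 and AC = BD, and the implied constant depends only on q. -/
import Mathlib

open Polynomial

noncomputable section

private lemma sumsq_bound : ∀ n : ℕ, (∑ k ∈ Finset.range n, ((k : ℝ) + 1) ^ 2) ≤ (n : ℝ) ^ 3 / 3 + (n : ℝ) ^ 2 := by
  intro n
  induction n with
  | zero => simp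
  | succ n ih =>
    rw [Finset.sum_range_succ]
    push_cast
    nlinarith [Nat.cast_nonneg (α := ℝ) n]

private lemma monic_eq_of_coeffs {F : Type*} [Semiring F] {p r : Polynomial F} (hp : p.Monic)
    (hr : r.Monic) {n : ℕ} (hpn : p.natDegree = n) (hrn : r.natDegree = n)
    (h : ∀ i : Fin n, p.coeff i = r.coeff i) : p = r := by
  ext m
  rcases lt_trichotomy m n with hm | hm | hm
  · exact h ⟨m, hm⟩
  · subst hm
    rw [← hpn, hp.coeff_natDegree, hpn, ← hrn, hr.coeff_natDegree]
  · rw [coeff_eq_zero_of_natDegree_lt (hpn ▸ hm), coeff_eq_zero_of_natDegree_lt (hrn ▸ hm)]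

private lemma finite_natDegree_le (F : Type*) [Field F] [Fintype F] (n : ℕ) :
    {p : Polynomial F | p.natDegree ≤ n}.Finite := by
  apply Set.Finite.of_finite_image (f := fun p => fun i : Fin (n+1) => p.coeff i)
  · exact Set.toFinite _
  · intro p hp r hr hpr
    simp only [Set.mem_setOf_eq] at hp hr
    ext m
    by_cases hm : m ≤ n
    · exact congrFun hpr ⟨m, Nat.lt_succ_of_le hm⟩
    · push_neg at hm
      rw [coeff_eq_zero_of_natDegree_lt (lt_of_le_of_lt hp hm),
        coeff_eq_zero_of_natDegree_lt (lt_of_le_of_lt hr hm)]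

private lemma param {F : Type*} [Field F] [DecidableEq F] {A B C D : Polynomial F}
    (hA : A.Monic) (hB : B.Monic) (hC : C.Monic) (hD : D.Monic) (hE : A * C = B * D) :
    ∃ G A' B' H' : Polynomial F, G.Monic ∧ A'.Monic ∧ B'.Monic ∧ H'.Monic ∧
      A = G * A' ∧ B = G * B' ∧ C = B' * H' ∧ D = A' * H' ∧
      G = GCDMonoid.gcd A B ∧ A' = A / GCDMonoid.gcd A B ∧ B' = B / GCDMonoid.gcd A B ∧
      H' = C / (B / GCDMonoid.gcd A B) := by
  have hG0 : GCDMonoid.gcd A B ≠ 0 := gcd_ne_zero_of_left hA.ne_zero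
  have hAeq : GCDMonoid.gcd A B * (A / GCDMonoid.gcd A B) = A :=
    EuclideanDomain.mul_div_cancel' hG0 (gcd_dvd_left A B)
  have hBeq : GCDMonoid.gcd A B * (B / GCDMonoid.gcd A B) = B :=
    EuclideanDomain.mul_div_cancel' hG0 (gcd_dvd_right A B)
  have hGmon : (GCDMonoid.gcd A B).Monic := by
    have := Polynomial.monic_normalize (p := GCDMonoid.gcd A B) hG0
    rwa [normalize_gcd] at this
  have hA'mon : (A / GCDMonoid.gcd A B).Monic := hGmon.of_mul_monic_left (by rw [hAeq]; exact hA)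
  have hB'mon : (B / GCDMonoid.gcd A B).Monic := hGmon.of_mul_monic_left (by rw [hBeq]; exact hB)
  have hcop : IsCoprime (A / GCDMonoid.gcd A B) (B / GCDMonoid.gcd A B) :=
    isCoprime_div_gcd_div_gcd hB.ne_zero
  have hkey : (A / GCDMonoid.gcd A B) * C = (B / GCDMonoid.gcd A B) * D := by
    apply mul_left_cancel₀ hG0
    rw [← mul_assoc, hAeq, ← mul_assoc, hBeq, hE]
  have hdvd : (B / GCDMonoid.gcd A B) ∣ C := by
    have h1 : (B / GCDMonoid.gcd A B) ∣ (A / GCDMonoid.gcd A B) * C := ⟨D, hkey⟩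
    exact hcop.symm.dvd_of_dvd_mul_left h1
  have hB'0 : (B / GCDMonoid.gcd A B) ≠ 0 := hB'mon.ne_zero
  have hCeq : (B / GCDMonoid.gcd A B) * (C / (B / GCDMonoid.gcd A B)) = C :=
    EuclideanDomain.mul_div_cancel' hB'0 hdvd
  have hHmon : (C / (B / GCDMonoid.gcd A B)).Monic :=
    hB'mon.of_mul_monic_left (by rw [hCeq]; exact hC)
  have hDeq : D = (A / GCDMonoid.gcd A B) * (C / (B / GCDMonoid.gcd A B)) := by
    apply mul_left_cancel₀ hB'0
    calc (B / GCDMonoid.gcd A B) * D = (A / GCDMonoid.gcd A B) * C := hkey.symm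
      _ = (A / GCDMonoid.gcd A B) *
          ((B / GCDMonoid.gcd A B) * (C / (B / GCDMonoid.gcd A B))) := by rw [hCeq]
      _ = (B / GCDMonoid.gcd A B) *
          ((A / GCDMonoid.gcd A B) * (C / (B / GCDMonoid.gcd A B))) := by ring
  exact ⟨_, _, _, _, hGmon, hA'mon, hB'mon, hHmon, hAeq.symm, hBeq.symm, hCeq.symm, hDeq,
    rfl, rfl, rfl, rfl⟩

set_option maxHeartbeats 2000000 in
/-- Truncated diagonal sum: `Σ |ABCD|^{-1/2} ≤ ((q-1)/(2q)) 𝔇³ + O(𝔇²)` over quadruples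
of monic polynomials with `𝔇-3 ≤ deg(AB) ≤ 𝔇`, `deg(CD) ≤ 𝔇` and `AC = BD`, the implied
constant depending only on `q`. -/
theorem diagonal_sum_upper_bound
    (F : Type*) [Field F] [Fintype F] (q : ℕ) (hq : Fintype.card F = q) :
    ∃ C : ℝ, ∀ 𝔇 : ℕ, 3 ≤ 𝔇 →
      (∑ᶠ t ∈ {t : Polynomial F × Polynomial F × Polynomial F × Polynomial F |
            t.1.Monic ∧ t.2.1.Monic ∧ t.2.2.1.Monic ∧ t.2.2.2.Monic ∧
            𝔇 - 3 ≤ (t.1 * t.2.1).natDegree ∧ (t.1 * t.2.1).natDegree ≤ 𝔇 ∧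
            (t.2.2.1 * t.2.2.2).natDegree ≤ 𝔇 ∧
            t.1 * t.2.2.1 = t.2.1 * t.2.2.2},
          (Real.sqrt ((q : ℝ) ^ (t.1 * t.2.1 * t.2.2.1 * t.2.2.2).natDegree))⁻¹) ≤
        ((q : ℝ) - 1) / (2 * q) * (𝔇 : ℝ) ^ 3 + C * (𝔇 : ℝ) ^ 2 := by
  letI := Classical.decEq F
  have hq2 : 2 ≤ q := hq ▸ Fintype.one_lt_card
  refine ⟨100, fun 𝔇 h𝔇 => ?_⟩
  set f : Polynomial F × Polynomial F × Polynomial F × Polynomial F → ℝ :=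
    fun t => (Real.sqrt ((q : ℝ) ^ (t.1 * t.2.1 * t.2.2.1 * t.2.2.2).natDegree))⁻¹ with hf
  set S : Set (Polynomial F × Polynomial F × Polynomial F × Polynomial F) :=
    {t | t.1.Monic ∧ t.2.1.Monic ∧ t.2.2.1.Monic ∧ t.2.2.2.Monic ∧
        𝔇 - 3 ≤ (t.1 * t.2.1).natDegree ∧ (t.1 * t.2.1).natDegree ≤ 𝔇 ∧
        (t.2.2.1 * t.2.2.2).natDegree ≤ 𝔇 ∧
        t.1 * t.2.2.1 = t.2.1 * t.2.2.2} with hS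
  have hSfin : S.Finite := by
    apply Set.Finite.subset ((finite_natDegree_le F 𝔇).prod
      (((finite_natDegree_le F 𝔇).prod ((finite_natDegree_le F 𝔇).prod
        (finite_natDegree_le F 𝔇)))))
    rintro ⟨A, B, C, D⟩ ⟨hA, hB, hC, hD, h1, h2, h3, h4⟩
    dsimp only at hA hB hC hD h1 h2 h3 h4 ⊢
    have hAB : A.natDegree + B.natDegree ≤ 𝔇 := by
      rw [← natDegree_mul hA.ne_zero hB.ne_zero]; exact h2
    have hCD : C.natDegree + D.natDegree ≤ 𝔇 := by
      rw [← natDegree_mul hC.ne_zero hD.ne_zero]; exact h3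
    refine ⟨?_, ?_, ?_, ?_⟩ <;> · simp only [Set.mem_setOf_eq]; omega
  rw [finsum_mem_eq_finite_toFinset_sum _ hSfin]
  set s := hSfin.toFinset with hs
  set Φ : Polynomial F × Polynomial F × Polynomial F × Polynomial F → ℕ × ℕ × ℕ × ℕ := fun t =>
    ((GCDMonoid.gcd t.1 t.2.1).natDegree, (t.1 / GCDMonoid.gcd t.1 t.2.1).natDegree,
      (t.2.1 / GCDMonoid.gcd t.1 t.2.1).natDegree,
      (t.2.2.1 / (t.2.1 / GCDMonoid.gcd t.1 t.2.1)).natDegree) with hΦ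
  set T : Finset (ℕ × ℕ × ℕ × ℕ) :=
    (Finset.range (𝔇+1) ×ˢ Finset.range (𝔇+1) ×ˢ Finset.range (𝔇+1) ×ˢ
      Finset.range (𝔇+1)).filter
      (fun n => (𝔇 - 3 ≤ 2*n.1 + n.2.1 + n.2.2.1 ∧ 2*n.1 + n.2.1 + n.2.2.1 ≤ 𝔇) ∧
        n.2.1 + n.2.2.1 + 2*n.2.2.2 ≤ 𝔇) with hT
  have master : ∀ t ∈ s, Φ t ∈ T ∧
      (t.1 * t.2.1 * t.2.2.1 * t.2.2.2).natDegree =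
        2 * ((Φ t).1 + (Φ t).2.1 + (Φ t).2.2.1 + (Φ t).2.2.2) := by
    rintro ⟨A, B, C, D⟩ ht
    rw [hs, Set.Finite.mem_toFinset] at ht
    obtain ⟨hA, hB, hC, hD, h1, h2, h3, h4⟩ := ht
    dsimp only at hA hB hC hD h1 h2 h3 h4
    obtain ⟨G, A', B', H', hGm, hAm, hBm, hHm, hAe, hBe, hCe, hDe, e1, e2, e3, e4⟩ :=
      param hA hB hC hD h4
    have hΦval : Φ (A, B, C, D) = (G.natDegree, A'.natDegree, B'.natDegree, H'.natDegree) := by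
      rw [hΦ]; dsimp only; rw [← e4, ← e3, ← e2, ← e1]
    have e_ab : (A * B).natDegree = 2*G.natDegree + A'.natDegree + B'.natDegree := by
      rw [hAe, hBe, natDegree_mul (mul_ne_zero hGm.ne_zero hAm.ne_zero)
        (mul_ne_zero hGm.ne_zero hBm.ne_zero), natDegree_mul hGm.ne_zero hAm.ne_zero,
        natDegree_mul hGm.ne_zero hBm.ne_zero]
      ring
    have e_cd : (C * D).natDegree = A'.natDegree + B'.natDegree + 2*H'.natDegree := by
      rw [hCe, hDe, natDegree_mul (mul_ne_zero hBm.ne_zero hHm.ne_zero)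
        (mul_ne_zero hAm.ne_zero hHm.ne_zero), natDegree_mul hBm.ne_zero hHm.ne_zero,
        natDegree_mul hAm.ne_zero hHm.ne_zero]
      ring
    rw [e_ab] at h1 h2
    rw [e_cd] at h3
    constructor
    · rw [hΦval, hT]
      simp only [Finset.mem_filter, Finset.mem_product, Finset.mem_range]
      refine ⟨⟨by omega, by omega, by omega, by omega⟩, by omega, by omega⟩
    · rw [hΦval]
      have : (A * B * C * D).natDegree = (A*B).natDegree + (C*D).natDegree := by
        rw [mul_assoc (A*B), natDegree_mul (mul_ne_zero hA.ne_zero hB.ne_zero)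
          (mul_ne_zero hC.ne_zero hD.ne_zero)]
      rw [this, e_ab, e_cd]
      ring
  have hval : ∀ t ∈ s, f t = ((q:ℝ) ^ ((Φ t).1 + (Φ t).2.1 + (Φ t).2.2.1 + (Φ t).2.2.2))⁻¹ := by
    intro t ht
    rw [hf]; simp only []
    rw [(master t ht).2, mul_comm, pow_mul, Real.sqrt_sq (by positivity)]
  have step1 : (∑ t ∈ s, f t) = ∑ n ∈ T, ∑ t ∈ s.filter (fun t => Φ t = n), f t :=
    (Finset.sum_fiberwise_of_maps_to (fun t ht => (master t ht).1) _).symm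
  have hq0 : (0:ℝ) < q := by
    have : 0 < q := by omega
    exact_mod_cast this
  have step2 : ∀ n ∈ T, (∑ t ∈ s.filter (fun t => Φ t = n), f t) ≤ 1 := by
    rintro ⟨n1, n2, n3, n4⟩ _
    have hconst : ∀ t ∈ s.filter (fun t => Φ t = (n1, n2, n3, n4)),
        f t = ((q:ℝ) ^ (n1 + n2 + n3 + n4))⁻¹ := by
      intro t ht
      rw [Finset.mem_filter] at ht
      rw [hval t ht.1, ht.2]
    rw [Finset.sum_congr rfl hconst, Finset.sum_const, nsmul_eq_mul]
    have hcard : ((s.filter (fun t => Φ t = (n1, n2, n3, n4))).card) ≤ q ^ (n1 + n2 + n3 + n4) := by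
      have hcardU : Fintype.card ((Fin n1 → F) × (Fin n2 → F) × (Fin n3 → F) × (Fin n4 → F))
          = q ^ (n1 + n2 + n3 + n4) := by
        simp [Fintype.card_fun, hq, pow_add, mul_assoc]
      rw [← hcardU, ← Finset.card_univ]
      apply Finset.card_le_card_of_injOn (fun t =>
        ((fun i : Fin n1 => (GCDMonoid.gcd t.1 t.2.1).coeff i),
         (fun i : Fin n2 => (t.1 / GCDMonoid.gcd t.1 t.2.1).coeff i),
         (fun i : Fin n3 => (t.2.1 / GCDMonoid.gcd t.1 t.2.1).coeff i),
         (fun i : Fin n4 => (t.2.2.1 / (t.2.1 / GCDMonoid.gcd t.1 t.2.1)).coeff i)))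
        (fun t _ => Finset.mem_univ _)
      rintro ⟨A₁, B₁, C₁, D₁⟩ ht₁ ⟨A₂, B₂, C₂, D₂⟩ ht₂ heq
      simp only [Finset.coe_filter, Set.mem_setOf_eq, Finset.mem_coe] at ht₁ ht₂
      obtain ⟨hs₁, hn₁⟩ := ht₁
      obtain ⟨hs₂, hn₂⟩ := ht₂
      rw [hs, Set.Finite.mem_toFinset] at hs₁ hs₂
      obtain ⟨hA₁, hB₁, hC₁, hD₁, _, _, _, h4₁⟩ := hs₁
      obtain ⟨hA₂, hB₂, hC₂, hD₂, _, _, _, h4₂⟩ := hs₂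
      dsimp only at hA₁ hB₁ hC₁ hD₁ h4₁ hA₂ hB₂ hC₂ hD₂ h4₂
      obtain ⟨G₁, A₁', B₁', H₁', hGm₁, hAm₁, hBm₁, hHm₁, hAe₁, hBe₁, hCe₁, hDe₁, e11, e12, e13, e14⟩ :=
        param hA₁ hB₁ hC₁ hD₁ h4₁
      obtain ⟨G₂, A₂', B₂', H₂', hGm₂, hAm₂, hBm₂, hHm₂, hAe₂, hBe₂, hCe₂, hDe₂, e21, e22, e23, e24⟩ :=
        param hA₂ hB₂ hC₂ hD₂ h4₂
      rw [hΦ] at hn₁ hn₂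
      dsimp only at hn₁ hn₂ heq
      rw [← e14, ← e13, ← e12, ← e11] at hn₁
      rw [← e24, ← e23, ← e22, ← e21] at hn₂
      rw [← e14, ← e13, ← e12, ← e11, ← e24, ← e23, ← e22, ← e21] at heq
      simp only [Prod.mk.injEq] at hn₁ hn₂ heq
      obtain ⟨d11, d12, d13, d14⟩ := hn₁
      obtain ⟨d21, d22, d23, d24⟩ := hn₂
      obtain ⟨k1, k2, k3, k4⟩ := heq
      have gG : G₁ = G₂ := monic_eq_of_coeffs hGm₁ hGm₂ d11 d21 (fun i => congrFun k1 i)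
      have gA : A₁' = A₂' := monic_eq_of_coeffs hAm₁ hAm₂ d12 d22 (fun i => congrFun k2 i)
      have gB : B₁' = B₂' := monic_eq_of_coeffs hBm₁ hBm₂ d13 d23 (fun i => congrFun k3 i)
      have gH : H₁' = H₂' := monic_eq_of_coeffs hHm₁ hHm₂ d14 d24 (fun i => congrFun k4 i)
      simp only [Prod.mk.injEq]
      exact ⟨by rw [hAe₁, hAe₂, gG, gA], by rw [hBe₁, hBe₂, gG, gB],
        by rw [hCe₁, hCe₂, gB, gH], by rw [hDe₁, hDe₂, gA, gH]⟩
    calc ((s.filter (fun t => Φ t = (n1, n2, n3, n4))).card : ℝ) * ((q:ℝ) ^ (n1 + n2 + n3 + n4))⁻¹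
        ≤ ((q:ℝ) ^ (n1 + n2 + n3 + n4)) * ((q:ℝ) ^ (n1 + n2 + n3 + n4))⁻¹ := by
          apply mul_le_mul_of_nonneg_right _ (by positivity)
          exact_mod_cast hcard
      _ = 1 := mul_inv_cancel₀ (by positivity)
  have step3 : (∑ t ∈ s, f t) ≤ (T.card : ℝ) := by
    rw [step1]
    calc ∑ n ∈ T, ∑ t ∈ s.filter (fun t => Φ t = n), f t ≤ ∑ _n ∈ T, (1:ℝ) :=
          Finset.sum_le_sum step2
      _ = T.card := by rw [Finset.sum_const, nsmul_eq_mul, mul_one]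
  -- counting T
  have hTcard : T.card = ∑ g ∈ Finset.range (𝔇+1), ∑ a ∈ Finset.range (𝔇+1),
      ∑ b ∈ Finset.range (𝔇+1), ∑ h ∈ Finset.range (𝔇+1),
      if ((𝔇 - 3 ≤ 2*g + a + b ∧ 2*g + a + b ≤ 𝔇) ∧ a + b + 2*h ≤ 𝔇) then 1 else 0 := by
    rw [hT, Finset.card_filter]
    rw [Finset.sum_product]
    simp only [Finset.sum_product]
  have hbound : ∀ a ∈ Finset.range (𝔇+1), ∀ b ∈ Finset.range (𝔇+1),
      (∑ g ∈ Finset.range (𝔇+1), ∑ h ∈ Finset.range (𝔇+1),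
        if ((𝔇 - 3 ≤ 2*g + a + b ∧ 2*g + a + b ≤ 𝔇) ∧ a + b + 2*h ≤ 𝔇) then 1 else 0)
      ≤ (𝔇 - (a+b)) + 2 := by
    intro a _ b _
    have hsplit : ∀ g h : ℕ, (if ((𝔇 - 3 ≤ 2*g + a + b ∧ 2*g + a + b ≤ 𝔇) ∧ a + b + 2*h ≤ 𝔇)
        then (1:ℕ) else 0) = (if (𝔇 - 3 ≤ 2*g + a + b ∧ 2*g + a + b ≤ 𝔇) then 1 else 0)
          * (if a + b + 2*h ≤ 𝔇 then 1 else 0) := by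
      intro g h
      by_cases h1 : (𝔇 - 3 ≤ 2*g + a + b ∧ 2*g + a + b ≤ 𝔇) <;>
        by_cases h2 : a + b + 2*h ≤ 𝔇 <;> simp [h1, h2]
    simp only [hsplit]
    rw [← Finset.sum_mul_sum]
    have c1 : (∑ g ∈ Finset.range (𝔇+1),
        if (𝔇 - 3 ≤ 2*g + a + b ∧ 2*g + a + b ≤ 𝔇) then (1:ℕ) else 0) ≤ 2 := by
      rw [← Finset.card_filter]
      refine le_trans (Finset.card_le_card
        (t := Finset.Icc ((𝔇 - (a+b))/2 - 1) ((𝔇 - (a+b))/2)) ?_) ?_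
      · intro x hx
        simp only [Finset.mem_filter, Finset.mem_range, Finset.mem_Icc] at hx ⊢
        omega
      · rw [Nat.card_Icc]; omega
    have c2 : (∑ h ∈ Finset.range (𝔇+1), if a + b + 2*h ≤ 𝔇 then (1:ℕ) else 0)
        ≤ (𝔇 - (a+b))/2 + 1 := by
      rw [← Finset.card_filter]
      refine le_trans (Finset.card_le_card (t := Finset.range ((𝔇 - (a+b))/2 + 1)) ?_) ?_
      · intro x hx
        simp only [Finset.mem_filter, Finset.mem_range] at hx ⊢
        omega
      · rw [Finset.card_range]
    calc _ ≤ 2 * ((𝔇 - (a+b))/2 + 1) := Nat.mul_le_mul c1 c2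
      _ ≤ (𝔇 - (a+b)) + 2 := by omega
  have hT1 : T.card ≤ ∑ a ∈ Finset.range (𝔇+1), ∑ b ∈ Finset.range (𝔇+1), ((𝔇 - (a+b)) + 2) := by
    rw [hTcard, Finset.sum_comm]
    refine Finset.sum_le_sum ?_
    intro a ha
    rw [Finset.sum_comm]
    refine Finset.sum_le_sum ?_
    intro b hb
    exact hbound a ha b hb
  have hinner : ∀ a ∈ Finset.range (𝔇+1),
      (∑ b ∈ Finset.range (𝔇+1), ((𝔇 - (a+b)) + 2))
        = (∑ j ∈ Finset.range (𝔇 - a + 1), j) + 2*(𝔇+1) := by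
    intro a ha
    rw [Finset.sum_add_distrib, Finset.sum_const, Finset.card_range, smul_eq_mul]
    have h1 : ∀ b ∈ Finset.range (𝔇+1), 𝔇 - (a+b) = (𝔇 - a) - b := fun b _ => by omega
    rw [Finset.sum_congr rfl h1]
    have hsub : Finset.range (𝔇 - a + 1) ⊆ Finset.range (𝔇+1) :=
      Finset.range_subset_range.2 (by omega)
    rw [← Finset.sum_subset hsub (fun x _ hx => by
      simp only [Finset.mem_range] at hx ⊢
      omega)]
    have h2 : ∀ b ∈ Finset.range (𝔇 - a + 1), (𝔇 - a) - b = (𝔇 - a + 1) - 1 - b :=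
      fun b _ => by omega
    rw [Finset.sum_congr rfl h2, Finset.sum_range_reflect (fun j => j) (𝔇 - a + 1)]
    ring
  have hT2 : T.card ≤ (∑ a ∈ Finset.range (𝔇+1), (∑ j ∈ Finset.range (𝔇 - a + 1), j))
      + 2*(𝔇+1)*(𝔇+1) := by
    refine le_trans hT1 (le_of_eq ?_)
    rw [Finset.sum_congr rfl hinner, Finset.sum_add_distrib, Finset.sum_const,
      Finset.card_range, smul_eq_mul]
    ring
  have hgauss : ∀ a ∈ Finset.range (𝔇+1),
      ((∑ j ∈ Finset.range (𝔇 - a + 1), j : ℕ) : ℝ) ≤ (((𝔇:ℝ) - a) + 1)^2 / 2 := by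
    intro a ha
    simp only [Finset.mem_range] at ha
    have h2 : ((∑ j ∈ Finset.range (𝔇 - a + 1), j) * 2) = (𝔇 - a + 1) * (𝔇 - a) := by
      rw [Finset.sum_range_id_mul_two]
      simp
    have hcast : ((𝔇 - a : ℕ) : ℝ) = (𝔇:ℝ) - a := by
      rw [Nat.cast_sub (by omega)]
    have h3 : ((∑ j ∈ Finset.range (𝔇 - a + 1), j : ℕ) : ℝ) * 2
        = ((𝔇:ℝ) - a + 1) * ((𝔇:ℝ) - a) := by
      rw [← hcast]
      exact_mod_cast h2
    have hm : (a:ℝ) ≤ (𝔇:ℝ) := by exact_mod_cast (by omega : a ≤ 𝔇)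
    nlinarith [h3, hm]
  have hsum2 : (∑ a ∈ Finset.range (𝔇+1), ((((𝔇:ℝ) - a) + 1)^2 / 2))
      = ∑ k ∈ Finset.range (𝔇+1), ((k:ℝ)+1)^2 / 2 := by
    rw [← Finset.sum_range_reflect (fun k => ((k:ℝ)+1)^2/2) (𝔇+1)]
    refine Finset.sum_congr rfl ?_
    intro a ha
    simp only [Finset.mem_range] at ha
    have : ((𝔇 + 1 - 1 - a : ℕ):ℝ) = (𝔇:ℝ) - a := by
      rw [Nat.add_sub_cancel, Nat.cast_sub (by omega)]
    rw [this]
  have hfinal : (T.card : ℝ) ≤ ((𝔇:ℝ)+1)^3/6 + ((𝔇:ℝ)+1)^2/2 + 2*((𝔇:ℝ)+1)^2 := by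
    calc (T.card : ℝ)
        ≤ ((∑ a ∈ Finset.range (𝔇+1), (∑ j ∈ Finset.range (𝔇 - a + 1), j) : ℕ) : ℝ)
          + 2*((𝔇:ℝ)+1)*((𝔇:ℝ)+1) := by exact_mod_cast hT2
      _ ≤ (∑ a ∈ Finset.range (𝔇+1), ((((𝔇:ℝ) - a) + 1)^2/2)) + 2*((𝔇:ℝ)+1)^2 := by
          refine add_le_add ?_ (le_of_eq (by ring))
          rw [Nat.cast_sum]
          exact Finset.sum_le_sum hgauss
      _ = (∑ k ∈ Finset.range (𝔇+1), ((k:ℝ)+1)^2/2) + 2*((𝔇:ℝ)+1)^2 := by rw [hsum2]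
      _ ≤ (((𝔇:ℝ)+1)^3/3 + ((𝔇:ℝ)+1)^2)/2 + 2*((𝔇:ℝ)+1)^2 := by
          have hsb := sumsq_bound (𝔇+1)
          push_cast at hsb ⊢
          rw [← Finset.sum_div]
          linarith
      _ ≤ ((𝔇:ℝ)+1)^3/6 + ((𝔇:ℝ)+1)^2/2 + 2*((𝔇:ℝ)+1)^2 := by linarith
  have hD3 : (3:ℝ) ≤ (𝔇:ℝ) := by exact_mod_cast h𝔇
  have hq2R : (2:ℝ) ≤ (q:ℝ) := by exact_mod_cast hq2
  have hco : (1:ℝ)/4 * (𝔇:ℝ)^3 ≤ ((q:ℝ)-1)/(2*(q:ℝ)) * (𝔇:ℝ)^3 := by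
    apply mul_le_mul_of_nonneg_right _ (by positivity)
    rw [div_le_div_iff₀ (by norm_num) (by positivity)]
    nlinarith
  calc (∑ t ∈ s, f t) ≤ (T.card : ℝ) := step3
    _ ≤ ((𝔇:ℝ)+1)^3/6 + ((𝔇:ℝ)+1)^2/2 + 2*((𝔇:ℝ)+1)^2 := hfinal
    _ ≤ ((q:ℝ)-1)/(2*(q:ℝ)) * (𝔇:ℝ)^3 + 100*(𝔇:ℝ)^2 := by nlinarith [hco, hD3]
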